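/- Let ψ > 1 and 0 < K < L be real numbers. Then the function z ↦ (z − K)⁺ / z^ψ on (0, L] attains its maximum exactly at the point z₁* = min(ψK/(ψ − 1), L); that is, z₁* is the unique maximizer of (z − K)⁺ z^{−ψ} over (0, L]. -/

import Mathlib

open Real

/-- For `ψ > 1` and `0 < K < L`, the function
`z ↦ (z − K)⁺ / z^ψ` on `(0, L]` attains its maximum exactly at
`z₁* = min(ψK/(ψ − 1), L)`, which is the unique maximizer. -/
theorem compound_lower_boundary (ψ K L : ℝ) (hψ : 1 < ψ) (hK : 0 < K) (hKL : K < L)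
    (z₁ : ℝ) (hz₁ : z₁ = min (ψ * K / (ψ - 1)) L) :
    z₁ ∈ Set.Ioc (0 : ℝ) L ∧
    ∀ z ∈ Set.Ioc (0 : ℝ) L, z ≠ z₁ →
      max (z - K) 0 / z ^ ψ < max (z₁ - K) 0 / z₁ ^ ψ := by
  have hψ1 : 0 < ψ - 1 := by linarith
  set m := ψ * K / (ψ - 1) with hm
  have hKm : K < m := by
    rw [hm, lt_div_iff₀ hψ1]; nlinarith
  have hKz₁ : K < z₁ := by rw [hz₁]; exact lt_min hKm hKL
  have hz₁pos : 0 < z₁ := hK.trans hKz₁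
  have hz₁L : z₁ ≤ L := hz₁ ▸ min_le_right _ _
  set g : ℝ → ℝ := fun z => (z - K) * z ^ (-ψ) with hg
  have hderiv : ∀ z : ℝ, 0 < z →
      HasDerivAt g (z ^ (-ψ - 1) * (ψ * K - (ψ - 1) * z)) z := by
    intro z hz
    have h1 : HasDerivAt (fun z : ℝ => z ^ (-ψ)) (-ψ * z ^ (-ψ - 1)) z :=
      Real.hasDerivAt_rpow_const (Or.inl hz.ne')
    have h2 : HasDerivAt (fun z : ℝ => z - K) 1 z := (hasDerivAt_id z).sub_const K
    have h3 := h2.mul h1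
    refine h3.congr_deriv ?_
    have hz' : z ^ (-ψ) = z * z ^ (-ψ - 1) := by
      have : z ^ (-ψ) = z ^ (1 + (-ψ - 1)) := by ring_nf
      rw [this, Real.rpow_add hz, Real.rpow_one]
    rw [hz']; ring
  have hmono : StrictMonoOn g (Set.Icc K m) := by
    apply strictMonoOn_of_deriv_pos (convex_Icc K m)
    · exact fun z hz =>
        ((hderiv z (hK.trans_le hz.1)).differentiableAt).continuousAt.continuousWithinAt
    · intro z hz
      rw [interior_Icc] at hz
      have hzpos : 0 < z := hK.trans hz.1
      rw [(hderiv z hzpos).deriv]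
      apply mul_pos (Real.rpow_pos_of_pos hzpos _)
      have h := hz.2
      rw [hm, lt_div_iff₀ hψ1] at h
      nlinarith
  have hanti : StrictAntiOn g (Set.Ici m) := by
    apply strictAntiOn_of_deriv_neg (convex_Ici m)
    · exact fun z hz =>
        ((hderiv z (hK.trans (hKm.trans_le hz))).differentiableAt).continuousAt.continuousWithinAt
    · intro z hz
      rw [interior_Ici] at hz
      have hzpos : 0 < z := hK.trans (hKm.trans hz)
      rw [(hderiv z hzpos).deriv]
      apply mul_neg_of_pos_of_neg (Real.rpow_pos_of_pos hzpos _)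
      have h : m < z := hz
      rw [hm, div_lt_iff₀ hψ1] at h
      nlinarith
  have key : ∀ z : ℝ, 0 < z → K < z → max (z - K) 0 / z ^ ψ = g z := by
    intro z hz hKz
    rw [max_eq_left (by linarith), div_eq_mul_inv, ← Real.rpow_neg hz.le]
  refine ⟨⟨hz₁pos, hz₁L⟩, ?_⟩
  rintro z ⟨hz0, hzL⟩ hne
  have hRHS : max (z₁ - K) 0 / z₁ ^ ψ = g z₁ := key z₁ hz₁pos hKz₁
  by_cases hzK : z ≤ K
  · have hL : max (z - K) 0 / z ^ ψ = 0 := by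
      rw [max_eq_right (by linarith), zero_div]
    rw [hL, hRHS]
    exact mul_pos (by linarith) (Real.rpow_pos_of_pos hz₁pos _)
  · push_neg at hzK
    rw [key z hz0 hzK, hRHS]
    by_cases hmL : m ≤ L
    · have hz₁m : z₁ = m := hz₁ ▸ min_eq_left hmL
      rw [hz₁m]
      rcases lt_trichotomy z m with h | h | h
      · exact hmono ⟨hzK.le, h.le⟩ ⟨hKm.le, le_refl m⟩ h
      · exact absurd (h.trans hz₁m.symm) hne
      · exact hanti (le_refl m) h.le h
    · push_neg at hmL
      have hz₁L' : z₁ = L := hz₁ ▸ min_eq_right hmL.le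
      have hzL' : z < L := lt_of_le_of_ne hzL (hz₁L' ▸ hne)
      rw [hz₁L']
      exact hmono ⟨hzK.le, by linarith⟩ ⟨by linarith, hmL.le⟩ hzL'
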